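/- Let G=(V,E) be a finite connected simple undirected graph with N > 3 vertices whose degree sequence is non-constant. If G attains the maximum local mean among all graphs on the vertex set V having the same degree function as G (i.e. μ_L(H) ≤ μ_L(G) for every graph H=(V,E_H) with D_i(H) = D_i(G) for all i ∈ V), then some vertex of minimum degree is adjacent in G to some vertex of maximum degree. -/

import Mathlib

open Finset

variable {V : Type*}

/-- Set of neighbors of `v` as a `Finset` (classical). -/
noncomputable def nbr (G : SimpleGraph V) [Fintype V] (v : V) : Finset V :=
  haveI := Classical.decRel G.Adj
  G.neighborFinset v

/-- Degree of vertex `v`: number of its neighbors. -/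
noncomputable def deg (G : SimpleGraph V) [Fintype V] (v : V) : ℕ :=
  (nbr G v).card

/-- Average degree of the friends of `v`. -/
noncomputable def friendAvg (G : SimpleGraph V) [Fintype V] (v : V) : ℝ :=
  (∑ j ∈ nbr G v, (deg G j : ℝ)) / (deg G v : ℝ)

/-- Mean degree of the network. -/
noncomputable def meanDeg (G : SimpleGraph V) [Fintype V] : ℝ :=
  (∑ i : V, (deg G i : ℝ)) / (Fintype.card V : ℝ)

/-- Local mean: average over vertices of the average friend degree. -/
noncomputable def localMean (G : SimpleGraph V) [Fintype V] : ℝ :=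
  (∑ i : V, friendAvg G i) / (Fintype.card V : ℝ)

/-- Global mean: total number of friends of friends over total number of friends. -/
noncomputable def globalMean (G : SimpleGraph V) [Fintype V] : ℝ :=
  (∑ i : V, ∑ j ∈ nbr G i, (deg G j : ℝ)) / (∑ i : V, (deg G i : ℝ))

/-- Number of (undirected) edges. -/
noncomputable def edgeCount (G : SimpleGraph V) [Fintype V] : ℕ :=
  Nat.card G.edgeSet

/-- m-th moment of the degree distribution. -/
noncomputable def kappa (G : SimpleGraph V) [Fintype V] (m : ℤ) : ℝ :=
  (∑ i : V, (deg G i : ℝ) ^ m) / (Fintype.card V : ℝ)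

lemma mem_nbr' (G : SimpleGraph V) [Fintype V] {v j : V} : j ∈ nbr G v ↔ G.Adj v j := by
  simp [nbr]

lemma keyineq' {a b c d : ℝ} (ha : 0 < a) (hb : 0 < b) (hc : 0 < c) (hd : 0 < d)
    (h1 : c < b) (h2 : a < d) :
    0 < (b - c)/a + (a - d)/b + (d - a)/c + (c - b)/d := by
  have key : (b - c)/a + (a - d)/b + (d - a)/c + (c - b)/d
      = (b - c)*(d - a)*(b*c + a*d)/(a*b*c*d) := by
    field_simp; ring
  rw [key]
  apply div_pos
  · exact mul_pos (mul_pos (by linarith) (by linarith)) (by positivity)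
  · positivity

/-- If a connected graph `G` on more than 3 vertices with non-constant degree sequence
attains the maximum local mean among all graphs on `V` with the same degree function,
then some vertex of minimum degree is adjacent to some vertex of maximum degree. -/
theorem stmt15 {V : Type*} [Fintype V] (G : SimpleGraph V)
    (hN : 3 < Fintype.card V) (hconn : G.Connected)
    (hnonconst : ¬ ∀ v w : V, deg G v = deg G w)
    (hmax : ∀ H : SimpleGraph V, (∀ v : V, deg H v = deg G v) → localMean H ≤ localMean G) :
    ∃ u w : V, (∀ v : V, deg G u ≤ deg G v) ∧ (∀ v : V, deg G v ≤ deg G w) ∧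
      G.Adj u w := by
  classical
  by_contra hcon
  push_neg at hcon
  haveI : Nonempty V := Fintype.card_pos_iff.mp (by omega)
  obtain ⟨u, -, hu'⟩ := Finset.exists_min_image univ (deg G) univ_nonempty
  obtain ⟨w, -, hw'⟩ := Finset.exists_max_image univ (deg G) univ_nonempty
  have hu : ∀ v, deg G u ≤ deg G v := fun v => hu' v (mem_univ v)
  have hw : ∀ v, deg G v ≤ deg G w := fun v => hw' v (mem_univ v)
  push_neg at hnonconst
  obtain ⟨p, q, hpq⟩ := hnonconst
  have huw_lt : deg G u < deg G w := by
    have h1 := hu p; have h2 := hu q; have h3 := hw p; have h4 := hw q; omega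
  have huw : ¬ G.Adj u w := hcon u w hu hw
  have hne_uw : u ≠ w := by intro h; rw [h] at huw_lt; omega
  -- find a neighbor x of u
  obtain ⟨pw⟩ := hconn.preconnected u w
  obtain ⟨x, hux⟩ : ∃ x, G.Adj u x := by
    cases pw with
    | nil => exact absurd rfl hne_uw
    | cons h _ => exact ⟨_, h⟩
  have hdxw : deg G x < deg G w := by
    by_contra h
    push_neg at h
    exact hcon u x hu (fun v => le_trans (hw v) h) hux
  have hxu_mem : u ∈ nbr G x := (mem_nbr' G).mpr hux.symm
  have hux_mem : x ∈ nbr G u := (mem_nbr' G).mpr hux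
  have hwu : ¬ G.Adj w u := fun h => huw h.symm
  have hu_not_w : u ∉ nbr G w := fun h => hwu ((mem_nbr' G).mp h)
  have hw_not_u : w ∉ nbr G u := fun h => huw ((mem_nbr' G).mp h)
  -- find y : neighbor of w, y ≠ x, y not adjacent to x
  have hcardB : (insert x ((nbr G x).erase u)).card ≤ deg G x := by
    have h1 : ((nbr G x).erase u).card = deg G x - 1 := by
      rw [card_erase_of_mem hxu_mem]; rfl
    have h2 := card_insert_le x ((nbr G x).erase u)
    have h3 : 0 < deg G x := card_pos.mpr ⟨u, hxu_mem⟩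
    omega
  have hyex : ∃ y ∈ nbr G w, y ∉ insert x ((nbr G x).erase u) := by
    by_contra h
    push_neg at h
    have hsub : nbr G w ⊆ insert x ((nbr G x).erase u) := h
    have h4 := card_le_card hsub
    have h5 : (nbr G w).card = deg G w := rfl
    omega
  obtain ⟨y, hy_mem, hy_notB⟩ := hyex
  have hwy : G.Adj w y := (mem_nbr' G).mp hy_mem
  have hne_xy : x ≠ y := fun h => hy_notB (by rw [← h]; exact mem_insert_self _ _)
  have hne_yu : y ≠ u := by intro h; rw [h] at hy_mem; exact hu_not_w hy_mem
  have hxy : ¬ G.Adj x y := by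
    intro h
    exact hy_notB (mem_insert_of_mem (mem_erase.mpr ⟨hne_yu, (mem_nbr' G).mpr h⟩))
  have hduy : deg G u < deg G y := by
    by_contra h
    push_neg at h
    exact hcon y w (fun v => le_trans h (hu v)) hw hwy.symm
  -- distinctness
  have hne_ux : u ≠ x := G.ne_of_adj hux
  have hne_uy : u ≠ y := fun h => hne_yu h.symm
  have hne_wx : w ≠ x := by intro h; rw [h] at hdxw; omega
  have hne_wy : w ≠ y := G.ne_of_adj hwy
  have hyx : ¬ G.Adj y x := fun h => hxy h.symm
  have hwy_mem : y ∈ nbr G w := hy_mem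
  have hyw_mem : w ∈ nbr G y := (mem_nbr' G).mpr hwy.symm
  have hy_not_x : y ∉ nbr G x := fun h => hxy ((mem_nbr' G).mp h)
  have hx_not_y : x ∉ nbr G y := fun h => hyx ((mem_nbr' G).mp h)
  -- the switched graph
  obtain ⟨H, hHadj⟩ : ∃ H : SimpleGraph V, ∀ a b : V, H.Adj a b ↔
      ((G.Adj a b ∧ ¬((a = u ∧ b = x) ∨ (a = x ∧ b = u) ∨ (a = w ∧ b = y) ∨ (a = y ∧ b = w)))
        ∨ (a = u ∧ b = w) ∨ (a = w ∧ b = u) ∨ (a = x ∧ b = y) ∨ (a = y ∧ b = x)) := by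
    refine ⟨⟨fun a b =>
      ((G.Adj a b ∧ ¬((a = u ∧ b = x) ∨ (a = x ∧ b = u) ∨ (a = w ∧ b = y) ∨ (a = y ∧ b = w)))
        ∨ (a = u ∧ b = w) ∨ (a = w ∧ b = u) ∨ (a = x ∧ b = y) ∨ (a = y ∧ b = x)),
      ?_, ?_⟩, fun a b => Iff.rfl⟩
    · refine ⟨fun a b h => ?_⟩
      rcases h with ⟨h1, h2⟩ | ⟨h1, h2⟩ | ⟨h1, h2⟩ | ⟨h1, h2⟩ | ⟨h1, h2⟩
      · refine Or.inl ⟨h1.symm, ?_⟩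
        rintro (⟨p, q⟩ | ⟨p, q⟩ | ⟨p, q⟩ | ⟨p, q⟩)
        exacts [h2 (Or.inr (Or.inl ⟨q, p⟩)), h2 (Or.inl ⟨q, p⟩),
          h2 (Or.inr (Or.inr (Or.inr ⟨q, p⟩))), h2 (Or.inr (Or.inr (Or.inl ⟨q, p⟩)))]
      · exact Or.inr (Or.inr (Or.inl ⟨h2, h1⟩))
      · exact Or.inr (Or.inl ⟨h2, h1⟩)
      · exact Or.inr (Or.inr (Or.inr (Or.inr ⟨h2, h1⟩)))
      · exact Or.inr (Or.inr (Or.inr (Or.inl ⟨h2, h1⟩)))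
    · refine ⟨fun a h => ?_⟩
      rcases h with ⟨h1, -⟩ | ⟨h1, h2⟩ | ⟨h1, h2⟩ | ⟨h1, h2⟩ | ⟨h1, h2⟩
      · exact G.loopless.irrefl a h1
      · exact hne_uw (h1.symm.trans h2)
      · exact hne_uw (h2.symm.trans h1)
      · exact hne_xy (h1.symm.trans h2)
      · exact hne_xy (h2.symm.trans h1)
  -- neighbor sets of H
  have hnbr_u : nbr H u = insert w ((nbr G u).erase x) := by
    ext j
    rw [mem_nbr', hHadj]
    rw [mem_insert, mem_erase, mem_nbr']
    constructor
    · rintro (⟨h1, h2⟩ | ⟨-, h⟩ | ⟨h, -⟩ | ⟨h, -⟩ | ⟨h, -⟩)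
      · exact Or.inr ⟨fun hx => h2 (Or.inl ⟨rfl, hx⟩), h1⟩
      · exact Or.inl h
      · exact absurd h hne_uw
      · exact absurd h hne_ux
      · exact absurd h hne_uy
    · rintro (h | ⟨h2, h1⟩)
      · exact Or.inr (Or.inl ⟨rfl, h⟩)
      · refine Or.inl ⟨h1, ?_⟩
        rintro (⟨-, h⟩ | ⟨h, -⟩ | ⟨h, -⟩ | ⟨h, -⟩)
        exacts [h2 h, hne_ux h, hne_uw h, hne_uy h]
  have hnbr_w : nbr H w = insert u ((nbr G w).erase y) := by
    ext j
    rw [mem_nbr', hHadj]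
    rw [mem_insert, mem_erase, mem_nbr']
    constructor
    · rintro (⟨h1, h2⟩ | ⟨h, -⟩ | ⟨-, h⟩ | ⟨h, -⟩ | ⟨h, -⟩)
      · exact Or.inr ⟨fun hy' => h2 (Or.inr (Or.inr (Or.inl ⟨rfl, hy'⟩))), h1⟩
      · exact absurd h.symm hne_uw
      · exact Or.inl h
      · exact absurd h hne_wx
      · exact absurd h hne_wy
    · rintro (h | ⟨h2, h1⟩)
      · exact Or.inr (Or.inr (Or.inl ⟨rfl, h⟩))
      · refine Or.inl ⟨h1, ?_⟩
        rintro (⟨h, -⟩ | ⟨h, -⟩ | ⟨-, h⟩ | ⟨h, -⟩)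
        exacts [hne_uw h.symm, hne_wx h, h2 h, hne_wy h]
  have hnbr_x : nbr H x = insert y ((nbr G x).erase u) := by
    ext j
    rw [mem_nbr', hHadj]
    rw [mem_insert, mem_erase, mem_nbr']
    constructor
    · rintro (⟨h1, h2⟩ | ⟨h, -⟩ | ⟨h, -⟩ | ⟨-, h⟩ | ⟨h, -⟩)
      · exact Or.inr ⟨fun hu' => h2 (Or.inr (Or.inl ⟨rfl, hu'⟩)), h1⟩
      · exact absurd h.symm hne_ux
      · exact absurd h.symm hne_wx
      · exact Or.inl h
      · exact absurd h hne_xy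
    · rintro (h | ⟨h2, h1⟩)
      · exact Or.inr (Or.inr (Or.inr (Or.inl ⟨rfl, h⟩)))
      · refine Or.inl ⟨h1, ?_⟩
        rintro (⟨h, -⟩ | ⟨-, h⟩ | ⟨h, -⟩ | ⟨h, -⟩)
        exacts [hne_ux h.symm, h2 h, hne_wx h.symm, hne_xy h]
  have hnbr_y : nbr H y = insert x ((nbr G y).erase w) := by
    ext j
    rw [mem_nbr', hHadj]
    rw [mem_insert, mem_erase, mem_nbr']
    constructor
    · rintro (⟨h1, h2⟩ | ⟨h, -⟩ | ⟨h, -⟩ | ⟨h, -⟩ | ⟨-, h⟩)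
      · exact Or.inr ⟨fun hw' => h2 (Or.inr (Or.inr (Or.inr ⟨rfl, hw'⟩))), h1⟩
      · exact absurd h.symm hne_uy
      · exact absurd h.symm hne_wy
      · exact absurd h.symm hne_xy
      · exact Or.inl h
    · rintro (h | ⟨h2, h1⟩)
      · exact Or.inr (Or.inr (Or.inr (Or.inr ⟨rfl, h⟩)))
      · refine Or.inl ⟨h1, ?_⟩
        rintro (⟨h, -⟩ | ⟨h, -⟩ | ⟨h, -⟩ | ⟨-, h⟩)
        exacts [hne_uy h.symm, hne_xy h.symm, hne_wy h.symm, h2 h]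
  have hnbr_gen : ∀ v, v ≠ u → v ≠ w → v ≠ x → v ≠ y → nbr H v = nbr G v := by
    intro v h1 h2 h3 h4
    ext j
    rw [mem_nbr', hHadj, mem_nbr']
    constructor
    · rintro (⟨h, -⟩ | ⟨h, -⟩ | ⟨h, -⟩ | ⟨h, -⟩ | ⟨h, -⟩)
      exacts [h, absurd h h1, absurd h h2, absurd h h3, absurd h h4]
    · intro h
      refine Or.inl ⟨h, ?_⟩
      rintro (⟨h', -⟩ | ⟨h', -⟩ | ⟨h', -⟩ | ⟨h', -⟩)
      exacts [h1 h', h3 h', h2 h', h4 h']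
  -- degrees agree
  have hw_not_mem_eu : w ∉ (nbr G u).erase x := fun h => hw_not_u (mem_of_mem_erase h)
  have hu_not_mem_ew : u ∉ (nbr G w).erase y := fun h => hu_not_w (mem_of_mem_erase h)
  have hy_not_mem_ex : y ∉ (nbr G x).erase u := fun h => hy_not_x (mem_of_mem_erase h)
  have hx_not_mem_ey : x ∉ (nbr G y).erase w := fun h => hx_not_y (mem_of_mem_erase h)
  have hdeg : ∀ v, deg H v = deg G v := by
    intro v
    by_cases h1 : v = u
    · subst h1
      show (nbr H v).card = (nbr G v).card
      rw [hnbr_u, card_insert_of_notMem hw_not_mem_eu, card_erase_of_mem hux_mem]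
      have : 0 < (nbr G v).card := card_pos.mpr ⟨x, hux_mem⟩
      omega
    by_cases h2 : v = w
    · subst h2
      show (nbr H v).card = (nbr G v).card
      rw [hnbr_w, card_insert_of_notMem hu_not_mem_ew, card_erase_of_mem hwy_mem]
      have : 0 < (nbr G v).card := card_pos.mpr ⟨y, hwy_mem⟩
      omega
    by_cases h3 : v = x
    · subst h3
      show (nbr H v).card = (nbr G v).card
      rw [hnbr_x, card_insert_of_notMem hy_not_mem_ex, card_erase_of_mem hxu_mem]
      have : 0 < (nbr G v).card := card_pos.mpr ⟨u, hxu_mem⟩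
      omega
    by_cases h4 : v = y
    · subst h4
      show (nbr H v).card = (nbr G v).card
      rw [hnbr_y, card_insert_of_notMem hx_not_mem_ey, card_erase_of_mem hyw_mem]
      have : 0 < (nbr G v).card := card_pos.mpr ⟨w, hyw_mem⟩
      omega
    · show (nbr H v).card = (nbr G v).card
      rw [hnbr_gen v h1 h2 h3 h4]
  -- friend sums
  have hsumH : ∀ v, (∑ j ∈ nbr H v, (deg H j : ℝ)) = ∑ j ∈ nbr H v, (deg G j : ℝ) :=
    fun v => Finset.sum_congr rfl (fun j _ => by rw [hdeg j])
  -- positivity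
  have ha : (0:ℝ) < (deg G u : ℝ) := by
    exact_mod_cast card_pos.mpr ⟨x, hux_mem⟩
  have hb : (0:ℝ) < (deg G w : ℝ) := by
    exact_mod_cast card_pos.mpr ⟨y, hwy_mem⟩
  have hc : (0:ℝ) < (deg G x : ℝ) := by
    exact_mod_cast card_pos.mpr ⟨u, hxu_mem⟩
  have hd : (0:ℝ) < (deg G y : ℝ) := by
    exact_mod_cast card_pos.mpr ⟨w, hyw_mem⟩
  have hcb : (deg G x : ℝ) < (deg G w : ℝ) := by exact_mod_cast hdxw
  have had : (deg G u : ℝ) < (deg G y : ℝ) := by exact_mod_cast hduy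
  -- friendAvg values on the four special vertices
  have hFA_u : friendAvg H u
      = ((deg G w : ℝ) + ((∑ j ∈ nbr G u, (deg G j : ℝ)) - (deg G x : ℝ))) / (deg G u : ℝ) := by
    unfold friendAvg
    rw [hsumH, hdeg, hnbr_u, sum_insert hw_not_mem_eu, sum_erase_eq_sub hux_mem]
  have hFA_w : friendAvg H w
      = ((deg G u : ℝ) + ((∑ j ∈ nbr G w, (deg G j : ℝ)) - (deg G y : ℝ))) / (deg G w : ℝ) := by
    unfold friendAvg
    rw [hsumH, hdeg, hnbr_w, sum_insert hu_not_mem_ew, sum_erase_eq_sub hwy_mem]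
  have hFA_x : friendAvg H x
      = ((deg G y : ℝ) + ((∑ j ∈ nbr G x, (deg G j : ℝ)) - (deg G u : ℝ))) / (deg G x : ℝ) := by
    unfold friendAvg
    rw [hsumH, hdeg, hnbr_x, sum_insert hy_not_mem_ex, sum_erase_eq_sub hxu_mem]
  have hFA_y : friendAvg H y
      = ((deg G x : ℝ) + ((∑ j ∈ nbr G y, (deg G j : ℝ)) - (deg G w : ℝ))) / (deg G y : ℝ) := by
    unfold friendAvg
    rw [hsumH, hdeg, hnbr_y, sum_insert hx_not_mem_ey, sum_erase_eq_sub hyw_mem]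
  have hFA_gen : ∀ v, v ≠ u → v ≠ w → v ≠ x → v ≠ y → friendAvg H v = friendAvg G v := by
    intro v h1 h2 h3 h4
    unfold friendAvg
    rw [hsumH, hdeg, hnbr_gen v h1 h2 h3 h4]
  -- the main strict inequality
  have hS_notmem1 : u ∉ ({w, x, y} : Finset V) := by simp [hne_uw, hne_ux, hne_uy]
  have hS_notmem2 : w ∉ ({x, y} : Finset V) := by simp [hne_wx, hne_wy]
  have hS_notmem3 : x ∉ ({y} : Finset V) := by simp [hne_xy]
  have key : ∑ i : V, friendAvg G i < ∑ i : V, friendAvg H i := by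
    have hsub : ({u, w, x, y} : Finset V) ⊆ univ := subset_univ _
    rw [← Finset.sum_sdiff hsub (f := friendAvg G), ← Finset.sum_sdiff hsub (f := friendAvg H)]
    have heq : ∑ i ∈ univ \ {u, w, x, y}, friendAvg H i
        = ∑ i ∈ univ \ {u, w, x, y}, friendAvg G i := by
      apply Finset.sum_congr rfl
      intro v hv
      rw [mem_sdiff] at hv
      have hv' := hv.2
      simp only [mem_insert, mem_singleton] at hv'
      push_neg at hv'
      exact hFA_gen v hv'.1 hv'.2.1 hv'.2.2.1 hv'.2.2.2
    rw [heq]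
    apply (add_lt_add_iff_left _).mpr
    rw [show ({u, w, x, y} : Finset V) = insert u {w, x, y} from rfl]
    rw [sum_insert hS_notmem1, sum_insert hS_notmem1,
        show ({w, x, y} : Finset V) = insert w {x, y} from rfl,
        sum_insert hS_notmem2, sum_insert hS_notmem2,
        show ({x, y} : Finset V) = insert x {y} from rfl,
        sum_insert hS_notmem3, sum_insert hS_notmem3,
        sum_singleton, sum_singleton]
    rw [hFA_u, hFA_w, hFA_x, hFA_y]
    unfold friendAvg
    have hdiff := keyineq' ha hb hc hd hcb had
    set a := (deg G u : ℝ)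
    set b := (deg G w : ℝ)
    set c := (deg G x : ℝ)
    set d := (deg G y : ℝ)
    set Su := ∑ j ∈ nbr G u, (deg G j : ℝ)
    set Sw := ∑ j ∈ nbr G w, (deg G j : ℝ)
    set Sx := ∑ j ∈ nbr G x, (deg G j : ℝ)
    set Sy := ∑ j ∈ nbr G y, (deg G j : ℝ)
    have hring : (b + (Su - c)) / a + ((a + (Sw - d)) / b + ((d + (Sx - a)) / c + (c + (Sy - b)) / d))
        = (Su / a + (Sw / b + (Sx / c + Sy / d)))
          + ((b - c)/a + (a - d)/b + (d - a)/c + (c - b)/d) := by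
      ring
    rw [hring]
    linarith
  have hlt : localMean G < localMean H := by
    unfold localMean
    have hNpos : (0:ℝ) < (Fintype.card V : ℝ) := by
      exact_mod_cast (by omega : 0 < Fintype.card V)
    exact div_lt_div_of_pos_right key hNpos
  exact absurd (hmax H hdeg) (not_le.mpr hlt)
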